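/- Let ω, ν > 0, λ₀ = (1−i)√(ω/(2ν)), and let a, a', b, κ ∈ ℂ (a' standing for the tangential derivative of the trace a, κ for the curvature). Define u⁰(S) = −a e^{−λ₀S}, u¹(S) = −(b + (1/2)κS a) e^{−λ₀S}, and u_s¹(S) = −(a'/λ₀) e^{−λ₀S}. Then for all S ≥ 0: (i) iω u¹(S) + ν (u¹)''(S) = κ(3iωS u⁰(S) + 3νS (u⁰)''(S) + ν (u⁰)'(S)); (ii) (u_s¹)'(S) = a' e^{−λ₀S} (i.e. ∂_S u_s¹ = −∂_τ u⁰ when ∂_τ a = a'); (iii) u¹(0) = −b, u_s¹(0) = −a'/λ₀, and u¹(S), u_s¹(S) → 0 as S → ∞. -/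

import Mathlib

open Filter Topology

noncomputable section

private lemma hd_exp (lam0 c d : ℂ) (S : ℝ) :
    HasDerivAt (fun S : ℝ => (c + d * S) * Complex.exp (-(lam0 * S)))
      ((d - lam0 * (c + d * S)) * Complex.exp (-(lam0 * S))) S := by
  have h1 : HasDerivAt (fun S : ℝ => (S : ℂ)) 1 S := by
    exact Complex.ofRealCLM.hasDerivAt (x := S)
  have hE : HasDerivAt (fun S : ℝ => Complex.exp (-(lam0 * S)))
      (Complex.exp (-(lam0 * S)) * (-(lam0 * 1))) S :=
    ((h1.const_mul lam0).neg).cexp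
  have hP : HasDerivAt (fun S : ℝ => c + d * S) (d * 1) S :=
    (h1.const_mul d).const_add c
  have := hP.mul hE
  refine this.congr_deriv ?_
  ring

private lemma deriv_form (lam0 c d : ℂ) :
    deriv (fun S : ℝ => (c + d * S) * Complex.exp (-(lam0 * S)))
      = fun S : ℝ => ((d - lam0 * c) + (-(lam0 * d)) * S) * Complex.exp (-(lam0 * S)) := by
  funext S
  rw [(hd_exp lam0 c d S).deriv]
  ring

theorem stmt_7 (ω ν : ℝ) (hω : 0 < ω) (hν : 0 < ν)
    (lam0 : ℂ) (hlam : lam0 = (1 - Complex.I) * (Real.sqrt (ω / (2 * ν)) : ℂ))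
    (a a' b κ : ℂ) :
    let u0 : ℝ → ℂ := fun S => -a * Complex.exp (-(lam0 * S))
    let u1 : ℝ → ℂ := fun S => -(b + (1 / 2) * κ * S * a) * Complex.exp (-(lam0 * S))
    let us1 : ℝ → ℂ := fun S => -(a' / lam0) * Complex.exp (-(lam0 * S))
    (∀ S : ℝ, 0 ≤ S →
      Complex.I * ω * u1 S + ν * deriv (deriv u1) S
        = κ * (3 * Complex.I * ω * S * u0 S + 3 * ν * S * deriv (deriv u0) S
            + ν * deriv u0 S))
    ∧ (∀ S : ℝ, 0 ≤ S → deriv us1 S = a' * Complex.exp (-(lam0 * S)))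
    ∧ u1 0 = -b
    ∧ us1 0 = -a' / lam0
    ∧ Tendsto u1 atTop (nhds 0)
    ∧ Tendsto us1 atTop (nhds 0) := by
  intro u0 u1 us1
  set r : ℝ := Real.sqrt (ω / (2 * ν)) with hr
  have hrpos : 0 < r := Real.sqrt_pos.mpr (by positivity)
  have hνC : (ν : ℂ) ≠ 0 := by exact_mod_cast hν.ne'
  have hlamne : lam0 ≠ 0 := by
    rw [hlam]
    apply mul_ne_zero
    · intro h
      have := congrArg Complex.im h
      simp at this
    · exact_mod_cast hrpos.ne'
  have hrsq : (r : ℂ) ^ 2 = (ω : ℂ) / (2 * ν) := by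
    rw [← Complex.ofReal_pow, Real.sq_sqrt (by positivity)]
    push_cast
    ring
  have hsq : (ν : ℂ) * lam0 ^ 2 = -(Complex.I * ω) := by
    rw [hlam, mul_pow, hrsq]
    have h1 : ((1 : ℂ) - Complex.I) ^ 2 = -(2 * Complex.I) := by
      have := Complex.I_sq
      ring_nf
      rw [Complex.I_sq]
      ring
    rw [h1]
    field_simp
  -- rewrite the three functions in (c + d S) E form
  have hu0 : u0 = fun S : ℝ => ((-a) + (0 : ℂ) * S) * Complex.exp (-(lam0 * S)) := by
    funext S; show -a * _ = _; ring
  have hu1 : u1 = fun S : ℝ => ((-b) + (-((1 / 2) * κ * a)) * S) * Complex.exp (-(lam0 * S)) := by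
    funext S; show -(b + (1 / 2) * κ * S * a) * _ = _; ring
  have hus1 : us1 = fun S : ℝ => ((-(a' / lam0)) + (0 : ℂ) * S) * Complex.exp (-(lam0 * S)) := by
    funext S; show -(a' / lam0) * _ = _; ring
  refine ⟨?_, ?_, ?_, ?_, ?_, ?_⟩
  · intro S hS
    rw [hu0, hu1, deriv_form, deriv_form, deriv_form, deriv_form]
    simp only
    linear_combination (((-b) + (-((1/2)*κ*a)) * (S:ℂ) + 3*κ*(S:ℂ)*a) *
      Complex.exp (-(lam0 * S))) * hsq
  · intro S hS
    rw [hus1, deriv_form]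
    simp only
    field_simp
    ring
  · show -(b + (1 / 2) * κ * (0:ℝ) * a) * Complex.exp (-(lam0 * (0:ℝ))) = -b
    push_cast
    simp
  · show -(a' / lam0) * Complex.exp (-(lam0 * (0:ℝ))) = -a' / lam0
    push_cast
    simp [neg_div]
  · -- u1 → 0
    have hnorm : ∀ S : ℝ, ‖Complex.exp (-(lam0 * S))‖ = Real.exp (-(r * S)) := by
      intro S
      rw [Complex.norm_exp]
      congr 1
      simp [hlam, Complex.mul_re, Complex.mul_im]
    have hrS : Tendsto (fun S : ℝ => r * S) atTop atTop :=
      tendsto_id.const_mul_atTop hrpos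
    have hexp0 : Tendsto (fun S : ℝ => Real.exp (-(r * S))) atTop (nhds 0) :=
      Real.tendsto_exp_atBot.comp (tendsto_neg_atBot_iff.mpr hrS)
    have hSexp : Tendsto (fun S : ℝ => S * Real.exp (-(r * S))) atTop (nhds 0) := by
      have h1 : Tendsto (fun x : ℝ => x ^ 1 * Real.exp (-x)) atTop (nhds 0) :=
        Real.tendsto_pow_mul_exp_neg_atTop_nhds_zero 1
      have h2 := (h1.comp hrS).const_mul (1 / r)
      simp only [Function.comp, pow_one, mul_zero] at h2
      refine h2.congr fun S => ?_
      field_simp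
    apply squeeze_zero_norm' (a := fun S : ℝ => ‖b‖ * Real.exp (-(r * S)) +
      ‖(1/2 : ℂ) * κ * a‖ * (S * Real.exp (-(r * S))))
    · filter_upwards [eventually_ge_atTop (0 : ℝ)] with S hS
      show ‖-(b + (1 / 2) * κ * S * a) * Complex.exp (-(lam0 * S))‖ ≤ _
      rw [norm_mul, norm_neg, hnorm]
      have h1 : ‖b + (1 / 2) * κ * (S:ℂ) * a‖ ≤ ‖b‖ + ‖(1/2 : ℂ) * κ * a‖ * S := by
        refine (norm_add_le _ _).trans ?_
        gcongr
        have : (1 / 2 : ℂ) * κ * (S:ℂ) * a = ((1/2 : ℂ) * κ * a) * (S : ℂ) := by ring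
        rw [this, norm_mul, Complex.norm_real, Real.norm_of_nonneg hS]
      calc ‖b + (1 / 2) * κ * (S:ℂ) * a‖ * Real.exp (-(r * S))
          ≤ (‖b‖ + ‖(1/2 : ℂ) * κ * a‖ * S) * Real.exp (-(r * S)) := by
            gcongr
        _ = ‖b‖ * Real.exp (-(r * S)) + ‖(1/2 : ℂ) * κ * a‖ * (S * Real.exp (-(r * S))) := by
            ring
    · have := (hexp0.const_mul ‖b‖).add (hSexp.const_mul ‖(1/2 : ℂ) * κ * a‖)
      simpa using this
  · -- us1 → 0
    have hnorm : ∀ S : ℝ, ‖Complex.exp (-(lam0 * S))‖ = Real.exp (-(r * S)) := by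
      intro S
      rw [Complex.norm_exp]
      congr 1
      simp [hlam, Complex.mul_re, Complex.mul_im]
    have hrS : Tendsto (fun S : ℝ => r * S) atTop atTop :=
      tendsto_id.const_mul_atTop hrpos
    have hexp0 : Tendsto (fun S : ℝ => Real.exp (-(r * S))) atTop (nhds 0) :=
      Real.tendsto_exp_atBot.comp (tendsto_neg_atBot_iff.mpr hrS)
    apply squeeze_zero_norm (a := fun S : ℝ => ‖a' / lam0‖ * Real.exp (-(r * S)))
    · intro S
      show ‖-(a' / lam0) * Complex.exp (-(lam0 * S))‖ ≤ _
      rw [norm_mul, norm_neg, hnorm]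
    · simpa using hexp0.const_mul ‖a' / lam0‖

end
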